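/- Let H : ℕ → ℕ satisfy H(0) = H(1) = 0 and, for all n ≥ 2, H(n) + H(n−1) + H(H(n−2)) = n − 1. Then H(n) = ⌊(√2 − 1)(n+1)⌋ for all n ≥ 0. -/

import Mathlib

private lemma hg_facts :
    0 < Real.sqrt 2 - 1 ∧ Real.sqrt 2 - 1 < 1/2 ∧
      (Real.sqrt 2 - 1) * (Real.sqrt 2 - 1) = 1 - 2 * (Real.sqrt 2 - 1) := by
  have h2 : Real.sqrt 2 * Real.sqrt 2 = 2 := Real.mul_self_sqrt (by norm_num)
  have hn : (0:ℝ) ≤ Real.sqrt 2 := Real.sqrt_nonneg 2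
  refine ⟨by nlinarith, by nlinarith, by nlinarith⟩

/-- Key integer floor identity. -/
private lemma hp_key (k : ℕ) :
    ⌊(Real.sqrt 2 - 1) * ((k:ℝ) + 3)⌋ + ⌊(Real.sqrt 2 - 1) * ((k:ℝ) + 2)⌋ +
      ⌊(Real.sqrt 2 - 1) * ((⌊(Real.sqrt 2 - 1) * ((k:ℝ) + 1)⌋ : ℝ) + 1)⌋ = (k:ℤ) + 1 := by
  set g : ℝ := Real.sqrt 2 - 1 with hgdef
  obtain ⟨hg0, hg1, hgsq⟩ := hg_facts
  have hirr : Irrational g := by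
    simpa using irrational_sqrt_two.sub_intCast 1
  set x : ℝ := (k:ℝ) + 1 with hx
  set a : ℤ := ⌊g * x⌋ with ha
  set t : ℝ := Int.fract (g * x) with ht
  have hat : (a:ℝ) + t = g * x := Int.floor_add_fract _
  have ht0 : 0 ≤ t := Int.fract_nonneg _
  have ht1 : t < 1 := Int.fract_lt_one _
  have hne1 : t ≠ 1 - 2*g := by
    intro h
    refine (hirr.mul_natCast (m := k + 3) (by omega)).ne_int (a+1) ?_
    push_cast
    rw [hx] at hat
    linarith
  have hne2 : t ≠ 1 - g := by
    intro h
    refine (hirr.mul_natCast (m := k + 2) (by omega)).ne_int (a+1) ?_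
    push_cast
    rw [hx] at hat
    linarith
  have e1 : g * ((k:ℝ) + 2) = (a:ℝ) + (t + g) := by rw [hx] at hat; linear_combination -hat
  have e2 : g * ((k:ℝ) + 3) = (a:ℝ) + (t + 2*g) := by rw [hx] at hat; linear_combination -hat
  have e3 : g * ((a:ℝ) + 1) = ((((k:ℤ)+1) - 2*a : ℤ):ℝ) + (g - t*(2+g)) := by
    have haa : (a:ℝ) = g * x - t := by linarith
    rw [hx] at haa
    push_cast
    linear_combination (g+2)*haa + ((k:ℝ)+1)*hgsq
  rw [e1, e2, e3, Int.floor_intCast_add, Int.floor_intCast_add, Int.floor_intCast_add]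
  have hcase : t < 1 - 2*g ∨ (1 - 2*g < t ∧ t < 1 - g) ∨ 1 - g < t := by
    rcases lt_trichotomy t (1 - 2*g) with h | h | h
    · exact Or.inl h
    · exact absurd h hne1
    rcases lt_trichotomy t (1 - g) with h' | h' | h'
    · exact Or.inr (Or.inl ⟨h, h'⟩)
    · exact absurd h' hne2
    · exact Or.inr (Or.inr h')
  have h2g : (0:ℝ) < 2 + g := by linarith
  rcases hcase with h | ⟨h, h'⟩ | h
  · have f1 : ⌊t + g⌋ = 0 := by
      rw [Int.floor_eq_iff]; constructor <;> push_cast <;> linarith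
    have f2 : ⌊t + 2*g⌋ = 0 := by
      rw [Int.floor_eq_iff]; constructor <;> push_cast <;> linarith
    have f3 : ⌊g - t*(2+g)⌋ = 0 := by
      rw [Int.floor_eq_iff]; constructor <;> push_cast <;>
        nlinarith [mul_lt_mul_of_pos_right h h2g, mul_nonneg ht0 h2g.le, hgsq]
    rw [f1, f2, f3]; ring
  · have f1 : ⌊t + g⌋ = 0 := by
      rw [Int.floor_eq_iff]; constructor <;> push_cast <;> linarith
    have f2 : ⌊t + 2*g⌋ = 1 := by
      rw [Int.floor_eq_iff]; constructor <;> push_cast <;> linarith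
    have f3 : ⌊g - t*(2+g)⌋ = -1 := by
      rw [Int.floor_eq_iff]; constructor <;> push_cast <;>
        nlinarith [mul_lt_mul_of_pos_right h h2g, mul_lt_mul_of_pos_right h' h2g, hgsq]
    rw [f1, f2, f3]; ring
  · have f1 : ⌊t + g⌋ = 1 := by
      rw [Int.floor_eq_iff]; constructor <;> push_cast <;> linarith
    have f2 : ⌊t + 2*g⌋ = 1 := by
      rw [Int.floor_eq_iff]; constructor <;> push_cast <;> linarith
    have f3 : ⌊g - t*(2+g)⌋ = -2 := by
      rw [Int.floor_eq_iff]; constructor <;> push_cast <;>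
        nlinarith [mul_lt_mul_of_pos_right h h2g, mul_lt_mul_of_pos_right ht1 h2g, hgsq]
    rw [f1, f2, f3]; ring

theorem hofstadter_pell
    (H : ℕ → ℕ) (h0 : H 0 = 0) (h1 : H 1 = 0)
    (hrec : ∀ n : ℕ, 2 ≤ n → H n + H (n - 1) + H (H (n - 2)) = n - 1) :
    ∀ n : ℕ, H n = ⌊(Real.sqrt 2 - 1) * ((n : ℝ) + 1)⌋₊ := by
  obtain ⟨hg0, hg1, hgsq⟩ := hg_facts
  set g : ℝ := Real.sqrt 2 - 1 with hgdef
  set f : ℕ → ℕ := fun n => ⌊g * ((n:ℝ) + 1)⌋₊ with hf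
  have hfle : ∀ n : ℕ, f n ≤ n := by
    intro n
    have hlt : g * ((n:ℝ) + 1) < (n:ℝ) + 1 := by nlinarith [Nat.cast_nonneg (α := ℝ) n]
    have h2 : ⌊g * ((n:ℝ) + 1)⌋₊ < n + 1 := by
      rw [Nat.floor_lt (by positivity)]; push_cast; linarith
    simp only [hf]; omega
  have hz : f 0 = 0 ∧ f 1 = 0 := by
    constructor <;> · simp only [hf]; rw [Nat.floor_eq_zero]; push_cast; nlinarith
  have hcast : ∀ j : ℕ, (f j : ℤ) = ⌊g * ((j:ℝ) + 1)⌋ := by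
    intro j; simp only [hf]; rw [Int.natCast_floor_eq_floor (by positivity)]
  have natkey : ∀ k : ℕ, f (k+2) + f (k+1) + f (f k) = k + 1 := by
    intro k
    have hk := hp_key k
    have goal' : (f (k+2) : ℤ) + f (k+1) + f (f k) = (k:ℤ) + 1 := by
      have h1' : (f (k+2) : ℤ) = ⌊g * ((k:ℝ) + 3)⌋ := by
        rw [hcast (k+2)]; congr 1; push_cast; ring
      have h2' : (f (k+1) : ℤ) = ⌊g * ((k:ℝ) + 2)⌋ := by
        rw [hcast (k+1)]; congr 1; push_cast; ring
      have h3' : (f (f k) : ℤ) = ⌊g * ((⌊g * ((k:ℝ) + 1)⌋ : ℝ) + 1)⌋ := by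
        have hfk' : (f k : ℝ) = (⌊g * ((k:ℝ) + 1)⌋ : ℝ) := by exact_mod_cast hcast k
        rw [hcast (f k), hfk']
      rw [h1', h2', h3', hk]
    exact_mod_cast goal'
  intro n
  induction n using Nat.strong_induction_on with
  | _ n ih =>
    match n with
    | 0 => rw [h0]; exact hz.1.symm
    | 1 => rw [h1]; exact hz.2.symm
    | (k+2) =>
      have e1 : H (k+1) = f (k+1) := ih (k+1) (by omega)
      have e0 : H k = f k := ih k (by omega)
      have e2 : H (H k) = f (f k) := by rw [e0]; exact ih (f k) (by have := hfle k; omega)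
      have hr : H (k+2) + H (k+1) + H (H k) = k + 1 := by
        have := hrec (k+2) (by omega)
        simpa using this
      have hnk := natkey k
      show H (k+2) = f (k+2)
      omega
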